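/- The set B_⋈ := (−10,10)×(−1,1)×(−2,0) ∪ (−1,1)×(−10,10)×(0,2) ∪ (−1,1)×(−1,1)×{0} ⊆ ℝ³ (two crossing beams) is regular in the sense of Gröger with volume-preserving charts: for every boundary point x of B_⋈ there exists an open neighborhood Υ_x and a volume-preserving bi-Lipschitz map φ_x: Υ_x → ℝ³ with φ_x(x)=0 such that φ_x(B_⋈ ∩ Υ_x) equals αK_- for some α > 0 (where K_- is the lower half of the unit cube). -/

import Mathlib

open MeasureTheory Set Pointwise

noncomputable section

/-- The two crossing beams in `ℝ³`: `(−10,10)×(−1,1)×(−2,0) ∪ (−1,1)×(−10,10)×(0,2)`,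
glued along the open square `(−1,1)×(−1,1)×{0}`. -/
def crossingBeams : Set (EuclideanSpace ℝ (Fin 3)) :=
  {x | x 0 ∈ Ioo (-10 : ℝ) 10 ∧ x 1 ∈ Ioo (-1 : ℝ) 1 ∧ x 2 ∈ Ioo (-2 : ℝ) 0} ∪
  {x | x 0 ∈ Ioo (-1 : ℝ) 1 ∧ x 1 ∈ Ioo (-10 : ℝ) 10 ∧ x 2 ∈ Ioo (0 : ℝ) 2} ∪
  {x | x 0 ∈ Ioo (-1 : ℝ) 1 ∧ x 1 ∈ Ioo (-1 : ℝ) 1 ∧ x 2 = 0}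

/-- The lower half of the (open) unit cube of `ℝ³`. -/
def lowerHalfUnitCube : Set (EuclideanSpace ℝ (Fin 3)) :=
  {x | ∀ i, |x i| < 1} ∩ {x | x 2 < 0}

section AuxiliaryGroegerMachinery

open Matrix

abbrev EE := EuclideanSpace ℝ (Fin 3)

lemma EE.ext' {a b : EE} (h : ∀ i, a i = b i) : a = b := PiLp.ext h

lemma abs_coord_le_dist (p q : EE) (i : Fin 3) : |p i - q i| ≤ dist p q := by
  rw [EuclideanSpace.dist_eq]
  simp only [Real.dist_eq, sq_abs]
  have h1 : |p i - q i| = Real.sqrt ((p i - q i)^2) := by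
    rw [Real.sqrt_sq_eq_abs]
  rw [h1]
  apply Real.sqrt_le_sqrt
  exact Finset.single_le_sum (f := fun j => (p j - q j)^2) (fun j _ => sq_nonneg _)
    (Finset.mem_univ i)

lemma dist_le_of_coords (p q : EE) (C : ℝ) (h : ∀ i, |p i - q i| ≤ C) : dist p q ≤ 2 * C := by
  have hC : 0 ≤ C := le_trans (abs_nonneg _) (h 0)
  rw [EuclideanSpace.dist_eq]
  simp only [Real.dist_eq, sq_abs]
  have h3 : ∀ i, (p i - q i)^2 ≤ C^2 := fun i => by
    have := h i; nlinarith [abs_nonneg (p i - q i), neg_abs_le (p i - q i), le_abs_self (p i - q i)]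
  calc Real.sqrt (∑ i, (p i - q i)^2) ≤ Real.sqrt ((2*C)^2) := by
        apply Real.sqrt_le_sqrt; rw [Fin.sum_univ_three]; nlinarith [h3 0, h3 1, h3 2]
    _ = 2*C := Real.sqrt_sq (by linarith)

lemma norm_lt_of_coords (q : EE) (r : ℝ) (h : ∀ i, |q i| < r) : ‖q‖ ≤ 2 * r := by
  have : dist q 0 ≤ 2 * r := by
    apply dist_le_of_coords
    intro i; simpa using (h i).le
  simpa using this

/-- Lipschitz from coordinatewise bounds. -/
lemma lipschitzWith_of_coords (f : EE → EE) (C : NNReal)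
    (h : ∀ p q : EE, ∀ i, |f p i - f q i| ≤ (C:ℝ) * dist p q) :
    LipschitzWith (2 * C) f := by
  rw [lipschitzWith_iff_dist_le_mul]
  intro p q
  have := dist_le_of_coords (f p) (f q) ((C:ℝ) * dist p q) (h p q)
  calc dist (f p) (f q) ≤ 2 * ((C:ℝ) * dist p q) := this
    _ = (2 * C : NNReal) * dist p q := by push_cast; ring

structure GM where
  f : EE → EE
  g : EE → EE
  K : NNReal
  lf : LipschitzWith K f
  lg : LipschitzWith K g
  gf : ∀ p, g (f p) = p
  fg : ∀ p, f (g p) = p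
  mg : MeasurePreserving g volume volume

namespace GM

lemma antilip (h : GM) : AntilipschitzWith h.K h.f :=
  h.lg.to_rightInverse h.gf

lemma image_eq (h : GM) (s : Set EE) : h.f '' s = h.g ⁻¹' s := by
  ext q
  constructor
  · rintro ⟨p, hp, rfl⟩; simpa [h.gf] using hp
  · intro hq; exact ⟨h.g q, hq, h.fg q⟩

lemma meas (h : GM) (s : Set EE) (hs : MeasurableSet s) : volume (h.f '' s) = volume s := by
  rw [h.image_eq, h.mg.measure_preimage hs.nullMeasurableSet]

def comp (h2 h1 : GM) : GM where
  f := h2.f ∘ h1.f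
  g := h1.g ∘ h2.g
  K := h2.K * h1.K
  lf := h2.lf.comp h1.lf
  lg := by
    have := h1.lg.comp h2.lg
    rwa [mul_comm] at this
  gf := by intro p; simp [Function.comp, h2.gf, h1.gf]
  fg := by intro p; simp [Function.comp, h1.fg, h2.fg]
  mg := h1.mg.comp h2.mg

def translate (v : EE) : GM where
  f := fun p => p + v
  g := fun p => p - v
  K := 1
  lf := by
    rw [lipschitzWith_iff_dist_le_mul]; intro p q; simp
  lg := by
    rw [lipschitzWith_iff_dist_le_mul]; intro p q; simp [dist_sub_right]
  gf := by intro p; simp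
  fg := by intro p; simp
  mg := (measurePreserving_sub_right volume v)

def ofMatrix (M N : Matrix (Fin 3) (Fin 3) ℝ) (hMN : M * N = 1) (hdet : |M.det| = 1) : GM where
  f := fun p => Matrix.toEuclideanLin M p
  g := fun p => Matrix.toEuclideanLin N p
  K := ‖LinearMap.toContinuousLinearMap (Matrix.toEuclideanLin M)‖₊ ⊔
       ‖LinearMap.toContinuousLinearMap (Matrix.toEuclideanLin N)‖₊
  lf := ((LinearMap.toContinuousLinearMap (Matrix.toEuclideanLin M)).lipschitz).weaken le_sup_left
  lg := ((LinearMap.toContinuousLinearMap (Matrix.toEuclideanLin N)).lipschitz).weaken le_sup_right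
  gf := by
    have hNM : N * M = 1 := mul_eq_one_comm.mp hMN
    intro p
    apply EE.ext'
    intro i
    show (N *ᵥ (M *ᵥ p)) i = p i
    rw [Matrix.mulVec_mulVec, hNM, Matrix.one_mulVec]
  fg := by
    intro p
    apply EE.ext'
    intro i
    show (M *ᵥ (N *ᵥ p)) i = p i
    rw [Matrix.mulVec_mulVec, hMN, Matrix.one_mulVec]
  mg := by
    have hdN : LinearMap.det (Matrix.toEuclideanLin N) = N.det := by
      rw [Matrix.toEuclideanLin_eq_toLin, LinearMap.det_toLin]
    have hdmul : M.det * N.det = 1 := by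
      rw [← Matrix.det_mul, hMN, Matrix.det_one]
    have habs : |N.det| = 1 := by
      have h1 : |M.det| * |N.det| = 1 := by rw [← abs_mul, hdmul, abs_one]
      rw [hdet, one_mul] at h1; exact h1
    have hne : LinearMap.det (Matrix.toEuclideanLin N) ≠ 0 := by
      rw [hdN]; intro h; rw [h] at habs; simp at habs
    refine ⟨(Matrix.toEuclideanLin N).continuous_of_finiteDimensional.measurable, ?_⟩
    ext s hs
    rw [Measure.map_apply (Matrix.toEuclideanLin N).continuous_of_finiteDimensional.measurable hs,
      Measure.addHaar_preimage_linearMap volume hne, hdN]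
    have : |(N.det)⁻¹| = 1 := by rw [abs_inv, habs]; norm_num
    rw [this]; simp

end GM

def mk3 (a b c : ℝ) : EE := (WithLp.equiv 2 (Fin 3 → ℝ)).symm ![a,b,c]

@[simp] lemma mk3_0 (a b c : ℝ) : mk3 a b c 0 = a := rfl
@[simp] lemma mk3_1 (a b c : ℝ) : mk3 a b c 1 = b := rfl
@[simp] lemma mk3_2 (a b c : ℝ) : mk3 a b c 2 = c := rfl

lemma coord_lipschitz (i : Fin 3) : LipschitzWith 1 (fun p : EE => p i) := by
  apply LipschitzWith.of_dist_le_mul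
  intro p q
  simpa [Real.dist_eq] using abs_coord_le_dist p q i

lemma coord_continuous (i : Fin 3) : Continuous fun p : EE => p i :=
  (coord_lipschitz i).continuous

lemma coord_measurable (i : Fin 3) : Measurable fun p : EE => p i :=
  (coord_continuous i).measurable

def foldF (p : EE) : EE := mk3 (p 0 - p 2) (p 1) (min (p 0) (p 2))
def foldG (q : EE) : EE := mk3 (q 2 + max (q 0) 0) (q 1) (q 2 - min (q 0) 0)

@[simp] lemma foldF_0 (p : EE) : foldF p 0 = p 0 - p 2 := rfl
@[simp] lemma foldF_1 (p : EE) : foldF p 1 = p 1 := rfl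
@[simp] lemma foldF_2 (p : EE) : foldF p 2 = min (p 0) (p 2) := rfl
@[simp] lemma foldG_0 (q : EE) : foldG q 0 = q 2 + max (q 0) 0 := rfl
@[simp] lemma foldG_1 (q : EE) : foldG q 1 = q 1 := rfl
@[simp] lemma foldG_2 (q : EE) : foldG q 2 = q 2 - min (q 0) 0 := rfl

lemma foldG_foldF (p : EE) : foldG (foldF p) = p := by
  apply EE.ext'
  intro i
  fin_cases i
  · show foldG (foldF p) 0 = p 0
    simp only [foldG_0, foldF_0, foldF_2]
    rcases le_total (p 2) (p 0) with h | h
    · rw [min_eq_right h, max_eq_left (by linarith)]; ring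
    · rw [min_eq_left h, max_eq_right (by linarith)]; ring
  · show foldG (foldF p) 1 = p 1
    simp
  · show foldG (foldF p) 2 = p 2
    simp only [foldG_2, foldF_0, foldF_2]
    rcases le_total (p 2) (p 0) with h | h
    · rw [min_eq_right h, min_eq_right (by linarith)]; ring
    · rw [min_eq_left h, min_eq_left (by linarith)]; ring

lemma foldF_foldG (q : EE) : foldF (foldG q) = q := by
  apply EE.ext'
  intro i
  fin_cases i
  · show foldF (foldG q) 0 = q 0
    simp only [foldF_0, foldG_0, foldG_2]
    rcases le_total (q 0) 0 with h | h
    · rw [max_eq_right h, min_eq_left h]; ring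
    · rw [max_eq_left h, min_eq_right h]; ring
  · show foldF (foldG q) 1 = q 1
    simp
  · show foldF (foldG q) 2 = q 2
    simp only [foldF_2, foldG_0, foldG_2]
    rcases le_total (q 0) 0 with h | h
    · rw [max_eq_right h, min_eq_left h, min_eq_left (by linarith)]; ring
    · rw [max_eq_left h, min_eq_right h, min_eq_right (by linarith)]; ring

def MA1 : Matrix (Fin 3) (Fin 3) ℝ := !![0,0,1;0,1,0;-1,0,1]
def MA2 : Matrix (Fin 3) (Fin 3) ℝ := !![1,0,1;0,1,0;0,0,1]

def LA1 : EE →ₗ[ℝ] EE := Matrix.toEuclideanLin MA1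
def LA2 : EE →ₗ[ℝ] EE := Matrix.toEuclideanLin MA2

lemma LA1_0 (q : EE) : LA1 q 0 = q 2 := by
  show (MA1 *ᵥ q) 0 = q 2
  simp [MA1, Matrix.mulVec, dotProduct, Fin.sum_univ_three, Matrix.vecHead, Matrix.vecTail]
lemma LA1_1 (q : EE) : LA1 q 1 = q 1 := by
  show (MA1 *ᵥ q) 1 = q 1
  simp [MA1, Matrix.mulVec, dotProduct, Fin.sum_univ_three, Matrix.vecHead, Matrix.vecTail]
lemma LA1_2 (q : EE) : LA1 q 2 = q 2 - q 0 := by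
  show (MA1 *ᵥ q) 2 = q 2 - q 0
  simp [MA1, Matrix.mulVec, dotProduct, Fin.sum_univ_three, Matrix.vecHead, Matrix.vecTail]
  ring
lemma LA2_0 (q : EE) : LA2 q 0 = q 0 + q 2 := by
  show (MA2 *ᵥ q) 0 = q 0 + q 2
  simp [MA2, Matrix.mulVec, dotProduct, Fin.sum_univ_three, Matrix.vecHead, Matrix.vecTail]
lemma LA2_1 (q : EE) : LA2 q 1 = q 1 := by
  show (MA2 *ᵥ q) 1 = q 1
  simp [MA2, Matrix.mulVec, dotProduct, Fin.sum_univ_three, Matrix.vecHead, Matrix.vecTail]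
lemma LA2_2 (q : EE) : LA2 q 2 = q 2 := by
  show (MA2 *ᵥ q) 2 = q 2
  simp [MA2, Matrix.mulVec, dotProduct, Fin.sum_univ_three, Matrix.vecHead, Matrix.vecTail]

lemma det_LA1 : LinearMap.det LA1 = 1 := by
  rw [LA1, Matrix.toEuclideanLin_eq_toLin, LinearMap.det_toLin]
  simp [MA1, Matrix.det_fin_three, Matrix.vecHead, Matrix.vecTail]
lemma det_LA2 : LinearMap.det LA2 = 1 := by
  rw [LA2, Matrix.toEuclideanLin_eq_toLin, LinearMap.det_toLin]
  simp [MA2, Matrix.det_fin_three, Matrix.vecHead, Matrix.vecTail]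

lemma foldG_eq_LA1 (q : EE) (h : q 0 ≤ 0) : foldG q = LA1 q := by
  apply EE.ext'
  intro i
  fin_cases i
  · show foldG q 0 = LA1 q 0
    rw [foldG_0, LA1_0, max_eq_right h]; ring
  · show foldG q 1 = LA1 q 1
    rw [foldG_1, LA1_1]
  · show foldG q 2 = LA1 q 2
    rw [foldG_2, LA1_2, min_eq_left h]
lemma foldG_eq_LA2 (q : EE) (h : 0 ≤ q 0) : foldG q = LA2 q := by
  apply EE.ext'
  intro i
  fin_cases i
  · show foldG q 0 = LA2 q 0
    rw [foldG_0, LA2_0, max_eq_left h]; ring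
  · show foldG q 1 = LA2 q 1
    rw [foldG_1, LA2_1]
  · show foldG q 2 = LA2 q 2
    rw [foldG_2, LA2_2, min_eq_right h]; ring

lemma foldG_measurable : Measurable foldG := by
  have : foldG = fun q => if q 0 ≤ 0 then LA1 q else LA2 q := by
    funext q
    split_ifs with h
    · exact foldG_eq_LA1 q h
    · exact foldG_eq_LA2 q (le_of_lt (not_le.mp h))
  rw [this]
  exact Measurable.ite (measurableSet_le (coord_measurable 0) measurable_const)
    LA1.continuous_of_finiteDimensional.measurable
    LA2.continuous_of_finiteDimensional.measurable

lemma foldG_measurePreserving : MeasurePreserving foldG volume volume := by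
  refine ⟨foldG_measurable, ?_⟩
  ext s hs
  rw [MeasureTheory.Measure.map_apply foldG_measurable hs]
  set T : Set EE := {p | p 0 ≤ p 2} with hT
  have hTmeas : MeasurableSet T := measurableSet_le (coord_measurable 0) (coord_measurable 2)
  have hsplit : foldG ⁻¹' s = (LA1 ⁻¹' (s ∩ T)) ∪ (LA2 ⁻¹' (s \ T)) := by
    ext q
    have h1T : LA1 q ∈ T ↔ q 0 ≤ 0 := by
      simp only [hT, mem_setOf_eq, LA1_0, LA1_2]; constructor <;> intro h <;> linarith
    have h2T : LA2 q ∈ T ↔ q 0 ≤ 0 := by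
      simp only [hT, mem_setOf_eq, LA2_0, LA2_2]; constructor <;> intro h <;> linarith
    by_cases hq : q 0 ≤ 0
    · rw [mem_preimage, foldG_eq_LA1 q hq]
      simp only [mem_union, mem_preimage, mem_inter_iff, mem_diff, h1T, h2T, hq]
      tauto
    · have hq' : 0 ≤ q 0 := le_of_lt (not_le.mp hq)
      rw [mem_preimage, foldG_eq_LA2 q hq']
      simp only [mem_union, mem_preimage, mem_inter_iff, mem_diff, h1T, h2T, hq]
      tauto
  have hdisj : Disjoint (LA1 ⁻¹' (s ∩ T)) (LA2 ⁻¹' (s \ T)) := by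
    rw [Set.disjoint_left]
    intro q h1 h2
    have h1T : LA1 q ∈ T := (mem_preimage.mp h1).2
    have h2T : LA2 q ∉ T := (mem_preimage.mp h2).2
    have e1 : q 0 ≤ 0 := by
      have := h1T; simp only [hT, mem_setOf_eq, LA1_0, LA1_2] at this; linarith
    have e2 : ¬ (q 0 ≤ 0) := by
      intro h; apply h2T; simp only [hT, mem_setOf_eq, LA2_0, LA2_2]; linarith
    exact e2 e1
  have hd1 : LinearMap.det LA1 ≠ 0 := by rw [det_LA1]; norm_num
  have hd2 : LinearMap.det LA2 ≠ 0 := by rw [det_LA2]; norm_num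
  rw [hsplit, measure_union hdisj
      (LA2.continuous_of_finiteDimensional.measurable (hs.diff hTmeas)),
    Measure.addHaar_preimage_linearMap volume hd1,
    Measure.addHaar_preimage_linearMap volume hd2, det_LA1, det_LA2]
  simp only [inv_one, abs_one, ENNReal.ofReal_one, one_mul]
  exact measure_inter_add_diff s hTmeas

def GM.fold : GM where
  f := foldF
  g := foldG
  K := 2 * 2
  lf := by
    apply lipschitzWith_of_coords
    intro p q i
    fin_cases i
    · show |foldF p 0 - foldF q 0| ≤ _
      rw [foldF_0, foldF_0]
      push_cast
      calc |p 0 - p 2 - (q 0 - q 2)| ≤ |p 0 - q 0| + |p 2 - q 2| := by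
            rw [show p 0 - p 2 - (q 0 - q 2) = (p 0 - q 0) - (p 2 - q 2) by ring]
            exact abs_sub _ _
        _ ≤ 2 * dist p q := by
            have := abs_coord_le_dist p q 0; have := abs_coord_le_dist p q 2; linarith
    · show |foldF p 1 - foldF q 1| ≤ _
      rw [foldF_1, foldF_1]
      push_cast
      have := abs_coord_le_dist p q 1
      have := dist_nonneg (x := p) (y := q)
      linarith
    · show |foldF p 2 - foldF q 2| ≤ _
      rw [foldF_2, foldF_2]
      push_cast
      have h := abs_min_sub_min_le_max (p 0) (p 2) (q 0) (q 2)
      have h0 := abs_coord_le_dist p q 0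
      have h2 := abs_coord_le_dist p q 2
      have hd := dist_nonneg (x := p) (y := q)
      have : max |p 0 - q 0| |p 2 - q 2| ≤ dist p q := max_le h0 h2
      linarith
  lg := by
    apply lipschitzWith_of_coords
    intro p q i
    have h0 := abs_coord_le_dist p q 0
    have h1 := abs_coord_le_dist p q 1
    have h2 := abs_coord_le_dist p q 2
    have hd := dist_nonneg (x := p) (y := q)
    fin_cases i
    · show |foldG p 0 - foldG q 0| ≤ _
      rw [foldG_0, foldG_0]
      push_cast
      have h := abs_max_sub_max_le_max (p 0) 0 (q 0) 0
      have : max |p 0 - q 0| |(0:ℝ) - 0| ≤ dist p q := by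
        apply max_le h0; simpa using hd
      calc |p 2 + max (p 0) 0 - (q 2 + max (q 0) 0)| ≤ |p 2 - q 2| + |max (p 0) 0 - max (q 0) 0| := by
            rw [show p 2 + max (p 0) 0 - (q 2 + max (q 0) 0) = (p 2 - q 2) + (max (p 0) 0 - max (q 0) 0) by ring]
            exact abs_add_le _ _
        _ ≤ 2 * dist p q := by linarith
    · show |foldG p 1 - foldG q 1| ≤ _
      rw [foldG_1, foldG_1]
      push_cast
      linarith
    · show |foldG p 2 - foldG q 2| ≤ _
      rw [foldG_2, foldG_2]
      push_cast
      have h := abs_min_sub_min_le_max (p 0) 0 (q 0) 0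
      have : max |p 0 - q 0| |(0:ℝ) - 0| ≤ dist p q := by
        apply max_le h0; simpa using hd
      calc |p 2 - min (p 0) 0 - (q 2 - min (q 0) 0)| ≤ |p 2 - q 2| + |min (p 0) 0 - min (q 0) 0| := by
            rw [show p 2 - min (p 0) 0 - (q 2 - min (q 0) 0) = (p 2 - q 2) - (min (p 0) 0 - min (q 0) 0) by ring]
            exact abs_sub _ _
        _ ≤ 2 * dist p q := by linarith
  gf := foldG_foldF
  fg := foldF_foldG
  mg := foldG_measurePreserving

namespace GM

lemma mulVec_lemma_tac : True := trivial

def diag (a b c : ℝ) (ha : a * a = 1) (hb : b * b = 1) (hc : c * c = 1) : GM :=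
  ofMatrix !![a,0,0;0,b,0;0,0,c] !![a,0,0;0,b,0;0,0,c]
    (by
      ext i j
      fin_cases i <;> fin_cases j <;>
        simp [Matrix.mul_apply, Fin.sum_univ_three, Matrix.one_apply, Matrix.vecHead,
          Matrix.vecTail, Fin.ext_iff, ha, hb, hc])
    (by
      have : a = 1 ∨ a = -1 := mul_self_eq_one_iff.mp ha
      have hd : (!![a,0,0;0,b,0;0,0,c]).det = a * (b * c) := by
        simp [Matrix.det_fin_three, Matrix.vecHead, Matrix.vecTail]; ring
      rw [hd, abs_mul, abs_mul]
      rcases mul_self_eq_one_iff.mp ha with h | h <;>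
        rcases mul_self_eq_one_iff.mp hb with h' | h' <;>
        rcases mul_self_eq_one_iff.mp hc with h'' | h'' <;>
        norm_num [h, h', h''])

@[simp] lemma diag_f_0 (a b c : ℝ) (ha hb hc) (p : EE) : (diag a b c ha hb hc).f p 0 = a * p 0 := by
  show (!![a,0,0;0,b,0;0,0,c] *ᵥ p) 0 = a * p 0
  simp [Matrix.mulVec, dotProduct, Fin.sum_univ_three, Matrix.vecHead, Matrix.vecTail]
@[simp] lemma diag_f_1 (a b c : ℝ) (ha hb hc) (p : EE) : (diag a b c ha hb hc).f p 1 = b * p 1 := by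
  show (!![a,0,0;0,b,0;0,0,c] *ᵥ p) 1 = b * p 1
  simp [Matrix.mulVec, dotProduct, Fin.sum_univ_three, Matrix.vecHead, Matrix.vecTail]
@[simp] lemma diag_f_2 (a b c : ℝ) (ha hb hc) (p : EE) : (diag a b c ha hb hc).f p 2 = c * p 2 := by
  show (!![a,0,0;0,b,0;0,0,c] *ᵥ p) 2 = c * p 2
  simp [Matrix.mulVec, dotProduct, Fin.sum_univ_three, Matrix.vecHead, Matrix.vecTail]

def swap01 : GM :=
  ofMatrix !![0,1,0;1,0,0;0,0,1] !![0,1,0;1,0,0;0,0,1]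
    (by
      ext i j
      fin_cases i <;> fin_cases j <;>
        simp [Matrix.mul_apply, Fin.sum_univ_three, Matrix.one_apply, Matrix.vecHead, Matrix.vecTail, Fin.ext_iff])
    (by simp [Matrix.det_fin_three, Matrix.vecHead, Matrix.vecTail])

@[simp] lemma swap01_f_0 (p : EE) : swap01.f p 0 = p 1 := by
  show (!![0,1,0;1,0,0;0,0,1] *ᵥ p) 0 = p 1
  simp [Matrix.mulVec, dotProduct, Fin.sum_univ_three, Matrix.vecHead, Matrix.vecTail]
@[simp] lemma swap01_f_1 (p : EE) : swap01.f p 1 = p 0 := by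
  show (!![0,1,0;1,0,0;0,0,1] *ᵥ p) 1 = p 0
  simp [Matrix.mulVec, dotProduct, Fin.sum_univ_three, Matrix.vecHead, Matrix.vecTail]
@[simp] lemma swap01_f_2 (p : EE) : swap01.f p 2 = p 2 := by
  show (!![0,1,0;1,0,0;0,0,1] *ᵥ p) 2 = p 2
  simp [Matrix.mulVec, dotProduct, Fin.sum_univ_three, Matrix.vecHead, Matrix.vecTail]

def swap12 : GM :=
  ofMatrix !![1,0,0;0,0,1;0,1,0] !![1,0,0;0,0,1;0,1,0]
    (by
      ext i j
      fin_cases i <;> fin_cases j <;>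
        simp [Matrix.mul_apply, Fin.sum_univ_three, Matrix.one_apply, Matrix.vecHead, Matrix.vecTail, Fin.ext_iff])
    (by simp [Matrix.det_fin_three, Matrix.vecHead, Matrix.vecTail])

@[simp] lemma swap12_f_0 (p : EE) : swap12.f p 0 = p 0 := by
  show (!![1,0,0;0,0,1;0,1,0] *ᵥ p) 0 = p 0
  simp [Matrix.mulVec, dotProduct, Fin.sum_univ_three, Matrix.vecHead, Matrix.vecTail]
@[simp] lemma swap12_f_1 (p : EE) : swap12.f p 1 = p 2 := by
  show (!![1,0,0;0,0,1;0,1,0] *ᵥ p) 1 = p 2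
  simp [Matrix.mulVec, dotProduct, Fin.sum_univ_three, Matrix.vecHead, Matrix.vecTail]
@[simp] lemma swap12_f_2 (p : EE) : swap12.f p 2 = p 1 := by
  show (!![1,0,0;0,0,1;0,1,0] *ᵥ p) 2 = p 1
  simp [Matrix.mulVec, dotProduct, Fin.sum_univ_three, Matrix.vecHead, Matrix.vecTail]

def swap02 : GM :=
  ofMatrix !![0,0,1;0,1,0;1,0,0] !![0,0,1;0,1,0;1,0,0]
    (by
      ext i j
      fin_cases i <;> fin_cases j <;>
        simp [Matrix.mul_apply, Fin.sum_univ_three, Matrix.one_apply, Matrix.vecHead, Matrix.vecTail, Fin.ext_iff])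
    (by simp [Matrix.det_fin_three, Matrix.vecHead, Matrix.vecTail])

@[simp] lemma swap02_f_0 (p : EE) : swap02.f p 0 = p 2 := by
  show (!![0,0,1;0,1,0;1,0,0] *ᵥ p) 0 = p 2
  simp [Matrix.mulVec, dotProduct, Fin.sum_univ_three, Matrix.vecHead, Matrix.vecTail]
@[simp] lemma swap02_f_1 (p : EE) : swap02.f p 1 = p 1 := by
  show (!![0,0,1;0,1,0;1,0,0] *ᵥ p) 1 = p 1
  simp [Matrix.mulVec, dotProduct, Fin.sum_univ_three, Matrix.vecHead, Matrix.vecTail]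
@[simp] lemma swap02_f_2 (p : EE) : swap02.f p 2 = p 0 := by
  show (!![0,0,1;0,1,0;1,0,0] *ᵥ p) 2 = p 0
  simp [Matrix.mulVec, dotProduct, Fin.sum_univ_three, Matrix.vecHead, Matrix.vecTail]

def shear : GM :=
  ofMatrix !![1,0,-1;0,1,0;0,0,1] !![1,0,1;0,1,0;0,0,1]
    (by
      ext i j
      fin_cases i <;> fin_cases j <;>
        simp [Matrix.mul_apply, Fin.sum_univ_three, Matrix.one_apply, Matrix.vecHead, Matrix.vecTail, Fin.ext_iff])
    (by simp [Matrix.det_fin_three, Matrix.vecHead, Matrix.vecTail])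

@[simp] lemma shear_f_0 (p : EE) : shear.f p 0 = p 0 - p 2 := by
  show (!![1,0,-1;0,1,0;0,0,1] *ᵥ p) 0 = p 0 - p 2
  simp [Matrix.mulVec, dotProduct, Fin.sum_univ_three, Matrix.vecHead, Matrix.vecTail]
  ring
@[simp] lemma shear_f_1 (p : EE) : shear.f p 1 = p 1 := by
  show (!![1,0,-1;0,1,0;0,0,1] *ᵥ p) 1 = p 1
  simp [Matrix.mulVec, dotProduct, Fin.sum_univ_three, Matrix.vecHead, Matrix.vecTail]
@[simp] lemma shear_f_2 (p : EE) : shear.f p 2 = p 2 := by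
  show (!![1,0,-1;0,1,0;0,0,1] *ᵥ p) 2 = p 2
  simp [Matrix.mulVec, dotProduct, Fin.sum_univ_three, Matrix.vecHead, Matrix.vecTail]

@[simp] lemma comp_f (h2 h1 : GM) (p : EE) : (h2.comp h1).f p = h2.f (h1.f p) := rfl
@[simp] lemma translate_f (v : EE) (p : EE) : (translate v).f p = p + v := rfl
@[simp] lemma fold_f (p : EE) : GM.fold.f p = foldF p := rfl

end GM

lemma mem_cB (p : EE) : p ∈ crossingBeams ↔
    ((-10 < p 0 ∧ p 0 < 10) ∧ (-1 < p 1 ∧ p 1 < 1) ∧ (-2 < p 2 ∧ p 2 < 0)) ∨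
    ((-1 < p 0 ∧ p 0 < 1) ∧ (-10 < p 1 ∧ p 1 < 10) ∧ (0 < p 2 ∧ p 2 < 2)) ∨
    ((-1 < p 0 ∧ p 0 < 1) ∧ (-1 < p 1 ∧ p 1 < 1) ∧ p 2 = 0) := by
  simp only [crossingBeams, mem_union, mem_setOf_eq, mem_Ioo]
  tauto

@[simp] lemma zero_coord (i : Fin 3) : (0 : EE) i = 0 := rfl

lemma foldF_zero : foldF (0 : EE) = 0 := by
  apply EE.ext'
  intro i
  fin_cases i <;> simp

def LocalChart (x : EE) : Prop :=
  ∃ (h : GM) (r : ℝ), 0 < r ∧ h.f x = 0 ∧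
    ∀ p : EE, (∀ k, |h.f p k| < r) → (p ∈ crossingBeams ↔ h.f p 2 < 0)

lemma modelHalf (x : EE) (h : GM) (hx : h.f x = 0) (r0 : ℝ) (hr0 : 0 < r0)
    (hiff : ∀ p : EE, (∀ k, |p k - x k| < r0) → (p ∈ crossingBeams ↔ h.f p 2 < 0)) :
    LocalChart x := by
  set K : ℝ := (h.K : ℝ) with hK
  have hK0 : 0 ≤ K := NNReal.coe_nonneg _
  refine ⟨h, r0 / (4 * (K + 1)), by positivity, hx, ?_⟩
  intro p hp
  apply hiff
  intro k
  have h1 : dist p x ≤ K * dist (h.f p) (h.f x) := h.antilip.le_mul_dist p x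
  have h2 : dist (h.f p) (h.f x) ≤ 2 * (r0 / (4 * (K + 1))) := by
    rw [hx, dist_zero_right]
    exact norm_lt_of_coords _ _ hp
  have h3 : |p k - x k| ≤ dist p x := abs_coord_le_dist p x k
  have h4 : K * (2 * (r0 / (4 * (K + 1)))) < r0 := by
    rw [div_eq_mul_inv]
    have : K * (2 * (r0 * (4 * (K + 1))⁻¹)) = r0 * (2 * K) * (4 * (K+1))⁻¹ := by ring
    rw [this]
    rw [mul_inv_lt_iff₀ (by positivity)]
    nlinarith
  calc |p k - x k| ≤ dist p x := h3
    _ ≤ K * dist (h.f p) (h.f x) := h1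
    _ ≤ K * (2 * (r0 / (4 * (K + 1)))) := by
        apply mul_le_mul_of_nonneg_left h2 hK0
    _ < r0 := h4

lemma modelOr2 (x : EE) (h : GM) (hx : h.f x = 0) (r0 : ℝ) (hr0 : 0 < r0)
    (hiff : ∀ p : EE, (∀ k, |p k - x k| < r0) →
      (p ∈ crossingBeams ↔ (h.f p 0 < 0 ∨ h.f p 2 < 0))) :
    LocalChart x := by
  apply modelHalf x (GM.fold.comp h) _ r0 hr0
  · intro p hp
    rw [hiff p hp]
    simp only [GM.comp_f, GM.fold_f, foldF_2]
    rw [min_lt_iff]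
  · simp [hx, foldF_zero]

lemma modelAnd2 (x : EE) (h : GM) (hx : h.f x = 0) (r0 : ℝ) (hr0 : 0 < r0)
    (hiff : ∀ p : EE, (∀ k, |p k - x k| < r0) →
      (p ∈ crossingBeams ↔ (0 < h.f p 0 ∧ 0 < h.f p 2))) :
    LocalChart x := by
  apply modelHalf x ((GM.diag 1 1 (-1) (by norm_num) (by norm_num) (by norm_num)).comp
    (GM.fold.comp h)) _ r0 hr0
  · intro p hp
    rw [hiff p hp]
    simp only [GM.comp_f, GM.fold_f, GM.diag_f_2, foldF_2]
    constructor
    · intro hc; nlinarith [lt_min_iff.mpr hc]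
    · intro hc
      have : 0 < min (h.f p 0) (h.f p 2) := by linarith
      exact lt_min_iff.mp this
  · apply EE.ext'
    intro i
    fin_cases i <;> simp [hx, foldF_zero]

lemma modelAnd3 (x : EE) (h : GM) (hx : h.f x = 0) (r0 : ℝ) (hr0 : 0 < r0)
    (hiff : ∀ p : EE, (∀ k, |p k - x k| < r0) →
      (p ∈ crossingBeams ↔ (0 < h.f p 0 ∧ 0 < h.f p 1 ∧ 0 < h.f p 2))) :
    LocalChart x := by
  apply modelHalf x ((GM.diag 1 1 (-1) (by norm_num) (by norm_num) (by norm_num)).comp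
    ((GM.fold.comp GM.swap01).comp (GM.fold.comp h))) _ r0 hr0
  · intro p hp
    rw [hiff p hp]
    set w0 := h.f p 0
    set w1 := h.f p 1
    set w2 := h.f p 2
    simp only [GM.comp_f, GM.fold_f, GM.diag_f_2, foldF_2, foldF_0, foldF_1,
      GM.swap01_f_0, GM.swap01_f_1, GM.swap01_f_2]
    have hh : (-1 : ℝ) * (min w1 (min w0 w2)) < 0 ↔ 0 < min w1 (min w0 w2) := by
      constructor <;> intro <;> linarith
    rw [hh, lt_min_iff, lt_min_iff]
    tauto
  · apply EE.ext'
    intro i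
    fin_cases i <;> simp [hx, foldF_zero]

lemma keyX (X Y Z : ℝ) :
    (min X Z < 0 ∧ ((X - Z) - min X Z < 0 ∨ Y < 0)) ↔
    ((Z < 0 ∧ Y < 0) ∨ (X < 0 ∧ 0 < Z) ∨ (X < 0 ∧ Y < 0 ∧ Z = 0)) := by
  rcases le_total X Z with h | h
  · rw [min_eq_left h]
    constructor
    · rintro ⟨h1, h2 | h2⟩
      · right; left; exact ⟨h1, by linarith⟩
      · rcases lt_trichotomy Z 0 with hz | hz | hz
        · exact Or.inl ⟨hz, h2⟩
        · right; right; exact ⟨h1, h2, hz⟩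
        · right; left; exact ⟨h1, hz⟩
    · rintro (⟨h1, h2⟩ | ⟨h1, h2⟩ | ⟨h1, h2, h3⟩)
      · exact ⟨by linarith, Or.inr h2⟩
      · exact ⟨h1, Or.inl (by linarith)⟩
      · exact ⟨h1, Or.inr h2⟩
  · rw [min_eq_right h]
    constructor
    · rintro ⟨h1, h2 | h2⟩
      · exfalso; linarith
      · exact Or.inl ⟨h1, h2⟩
    · rintro (⟨h1, h2⟩ | ⟨h1, h2⟩ | ⟨h1, h2, h3⟩)
      · exact ⟨h1, Or.inr h2⟩
      · exfalso; linarith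
      · exfalso; linarith

lemma modelX (x : EE) (h : GM) (hx : h.f x = 0) (r0 : ℝ) (hr0 : 0 < r0)
    (hiff : ∀ p : EE, (∀ k, |p k - x k| < r0) →
      (p ∈ crossingBeams ↔
        ((h.f p 2 < 0 ∧ h.f p 1 < 0) ∨ (h.f p 0 < 0 ∧ 0 < h.f p 2) ∨
         (h.f p 0 < 0 ∧ h.f p 1 < 0 ∧ h.f p 2 = 0)))) :
    LocalChart x := by
  set dd := GM.diag 1 (-1) (-1) (by norm_num) (by norm_num) (by norm_num) with hdd
  set d2 := GM.diag 1 1 (-1) (by norm_num) (by norm_num) (by norm_num) with hd2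
  apply modelHalf x
    ((d2.comp (GM.fold.comp GM.swap01)).comp ((dd.comp (GM.fold.comp GM.swap12)).comp
      ((GM.shear.comp GM.fold).comp h))) _ r0 hr0
  · intro p hp
    rw [hiff p hp]
    set X := h.f p 0
    set Y := h.f p 1
    set Z := h.f p 2
    have hXYZ := keyX X Y Z
    simp only [GM.comp_f, GM.fold_f, hdd, hd2, GM.diag_f_0, GM.diag_f_1, GM.diag_f_2,
      GM.swap01_f_0, GM.swap01_f_1, GM.swap01_f_2, GM.swap12_f_0, GM.swap12_f_1, GM.swap12_f_2,
      GM.shear_f_0, GM.shear_f_1, GM.shear_f_2, foldF_0, foldF_1, foldF_2]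
    rw [← hXYZ]
    set m := min X Z
    set u := X - Z
    set n := min (u - m) Y
    -- goal : final < 0 ↔ m < 0 ∧ (u - m < 0 ∨ Y < 0)
    have hgoal : -1 * min (-1 * m) (-1 * n) < 0 ↔ (m < 0 ∧ n < 0) := by
      constructor
      · intro hc
        have : 0 < min (-1 * m) (-1 * n) := by linarith
        have := lt_min_iff.mp this
        constructor <;> linarith [this.1, this.2]
      · rintro ⟨h1, h2⟩
        have : 0 < min (-1 * m) (-1 * n) := lt_min_iff.mpr ⟨by linarith, by linarith⟩
        linarith
    have hn : n < 0 ↔ (u - m < 0 ∨ Y < 0) := min_lt_iff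
    rw [hgoal, hn]
  · apply EE.ext'
    intro i
    fin_cases i <;> simp [hx, foldF_zero, hdd, hd2]

@[simp] lemma addneg_coord (p x : EE) (k : Fin 3) : (p + -x) k = p k - x k := by
  simp [sub_eq_add_neg]

lemma translate_neg_self (x : EE) : (GM.translate (-x)).f x = 0 := by
  show x + -x = 0
  simp

def swapFor (i : Fin 3) : GM :=
  if i = 0 then GM.swap02 else if i = 1 then GM.swap12
    else GM.diag 1 1 1 (by norm_num) (by norm_num) (by norm_num)

lemma swapFor_f_2 (i : Fin 3) (p : EE) : (swapFor i).f p 2 = p i := by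
  fin_cases i <;> simp [swapFor]

lemma swapFor_zero (i : Fin 3) : (swapFor i).f 0 = 0 := by
  fin_cases i <;> (apply EE.ext'; intro k; fin_cases k <;> simp [swapFor])

lemma diagGM_zero (a b c : ℝ) (ha hb hc) : (GM.diag a b c ha hb hc).f 0 = 0 := by
  apply EE.ext'; intro k; fin_cases k <;> simp

lemma sq_one_of_pm {e : ℝ} (he : e = 1 ∨ e = -1) : e * e = 1 := by
  rcases he with h | h <;> rw [h] <;> norm_num

lemma sub1 (x : EE) (i : Fin 3) (e : ℝ) (he : e = 1 ∨ e = -1) (r0 : ℝ) (hr0 : 0 < r0)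
    (hiff : ∀ p : EE, (∀ k, |p k - x k| < r0) →
      (p ∈ crossingBeams ↔ e * (p i - x i) < 0)) : LocalChart x := by
  apply modelHalf x ((GM.diag 1 1 e (by norm_num) (by norm_num) (sq_one_of_pm he)).comp
    ((swapFor i).comp (GM.translate (-x)))) _ r0 hr0
  · intro p hp
    rw [hiff p hp]
    simp [swapFor_f_2, sub_eq_add_neg]
  · simp [translate_neg_self, swapFor_zero, diagGM_zero]

lemma sub2 (x : EE) (i j : Fin 3) (π : GM) (hπ : ∀ q : EE, π.f q 0 = q i ∧ π.f q 2 = q j)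
    (hπ0 : π.f 0 = 0) (ei ej : ℝ) (hei : ei = 1 ∨ ei = -1) (hej : ej = 1 ∨ ej = -1)
    (r0 : ℝ) (hr0 : 0 < r0)
    (hiff : ∀ p : EE, (∀ k, |p k - x k| < r0) →
      (p ∈ crossingBeams ↔ (ei * (p i - x i) < 0 ∧ ej * (p j - x j) < 0))) : LocalChart x := by
  apply modelAnd2 x ((GM.diag (-ei) 1 (-ej) (by nlinarith [sq_one_of_pm hei])
      (by norm_num) (by nlinarith [sq_one_of_pm hej])).comp
    (π.comp (GM.translate (-x)))) _ r0 hr0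
  · intro p hp
    rw [hiff p hp]
    simp only [GM.comp_f, GM.diag_f_0, GM.diag_f_2, GM.translate_f,
      (hπ (p + -x)).1, (hπ (p + -x)).2, addneg_coord]
    constructor
    · rintro ⟨h1, h2⟩
      constructor <;> nlinarith
    · rintro ⟨h1, h2⟩
      constructor <;> nlinarith
  · simp [translate_neg_self, hπ0, diagGM_zero]

lemma subOr (x : EE) (i j : Fin 3) (π : GM) (hπ : ∀ q : EE, π.f q 0 = q i ∧ π.f q 2 = q j)
    (hπ0 : π.f 0 = 0) (ei ej : ℝ) (hei : ei = 1 ∨ ei = -1) (hej : ej = 1 ∨ ej = -1)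
    (r0 : ℝ) (hr0 : 0 < r0)
    (hiff : ∀ p : EE, (∀ k, |p k - x k| < r0) →
      (p ∈ crossingBeams ↔ (ei * (p i - x i) < 0 ∨ ej * (p j - x j) < 0))) : LocalChart x := by
  apply modelOr2 x ((GM.diag ei 1 ej (sq_one_of_pm hei) (by norm_num) (sq_one_of_pm hej)).comp
    (π.comp (GM.translate (-x)))) _ r0 hr0
  · intro p hp
    rw [hiff p hp]
    simp only [GM.comp_f, GM.diag_f_0, GM.diag_f_2, GM.translate_f,
      (hπ (p + -x)).1, (hπ (p + -x)).2, addneg_coord]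
  · simp [translate_neg_self, hπ0, diagGM_zero]

lemma sub3 (x : EE) (e0 e1 e2 : ℝ) (he0 : e0 = 1 ∨ e0 = -1) (he1 : e1 = 1 ∨ e1 = -1)
    (he2 : e2 = 1 ∨ e2 = -1) (r0 : ℝ) (hr0 : 0 < r0)
    (hiff : ∀ p : EE, (∀ k, |p k - x k| < r0) →
      (p ∈ crossingBeams ↔
        (e0 * (p 0 - x 0) < 0 ∧ e1 * (p 1 - x 1) < 0 ∧ e2 * (p 2 - x 2) < 0))) :
    LocalChart x := by
  apply modelAnd3 x ((GM.diag (-e0) (-e1) (-e2) (by nlinarith [sq_one_of_pm he0])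
      (by nlinarith [sq_one_of_pm he1]) (by nlinarith [sq_one_of_pm he2])).comp
    (GM.translate (-x))) _ r0 hr0
  · intro p hp
    rw [hiff p hp]
    simp only [GM.comp_f, GM.diag_f_0, GM.diag_f_1, GM.diag_f_2, GM.translate_f, addneg_coord]
    constructor
    · rintro ⟨h1, h2, h3⟩
      refine ⟨by nlinarith, by nlinarith, by nlinarith⟩
    · rintro ⟨h1, h2, h3⟩
      refine ⟨by nlinarith, by nlinarith, by nlinarith⟩
  · simp [translate_neg_self, diagGM_zero]

lemma subX (x : EE) (e0 e1 : ℝ) (he0 : e0 = 1 ∨ e0 = -1) (he1 : e1 = 1 ∨ e1 = -1)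
    (r0 : ℝ) (hr0 : 0 < r0)
    (hiff : ∀ p : EE, (∀ k, |p k - x k| < r0) →
      (p ∈ crossingBeams ↔
        ((p 2 - x 2 < 0 ∧ e1 * (p 1 - x 1) < 0) ∨
         (e0 * (p 0 - x 0) < 0 ∧ 0 < p 2 - x 2) ∨
         (e0 * (p 0 - x 0) < 0 ∧ e1 * (p 1 - x 1) < 0 ∧ p 2 - x 2 = 0)))) :
    LocalChart x := by
  apply modelX x ((GM.diag e0 e1 1 (sq_one_of_pm he0) (sq_one_of_pm he1) (by norm_num)).comp
    (GM.translate (-x))) _ r0 hr0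
  · intro p hp
    rw [hiff p hp]
    simp only [GM.comp_f, GM.diag_f_0, GM.diag_f_1, GM.diag_f_2, GM.translate_f, addneg_coord,
      one_mul]
  · simp [translate_neg_self, diagGM_zero]

lemma localChart_conj (x : EE) (σ : GM)
    (hσ : ∀ p : EE, σ.f p ∈ crossingBeams ↔ p ∈ crossingBeams)
    (h : LocalChart (σ.f x)) : LocalChart x := by
  obtain ⟨g, r, hr, hg0, hiff⟩ := h
  refine ⟨g.comp σ, r, hr, by simp [hg0], fun p hp => ?_⟩
  rw [← hσ p]
  exact hiff (σ.f p) hp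

def nega : GM := GM.diag (-1) 1 1 (by norm_num) (by norm_num) (by norm_num)
def negb : GM := GM.diag 1 (-1) 1 (by norm_num) (by norm_num) (by norm_num)
def id3 : GM := GM.diag 1 1 1 (by norm_num) (by norm_num) (by norm_num)

def sswap : GM :=
  GM.ofMatrix !![0,1,0;1,0,0;0,0,-1] !![0,1,0;1,0,0;0,0,-1]
    (by
      ext i j
      fin_cases i <;> fin_cases j <;>
        simp [Matrix.mul_apply, Fin.sum_univ_three, Matrix.one_apply, Matrix.vecHead,
          Matrix.vecTail, Fin.ext_iff])
    (by simp [Matrix.det_fin_three, Matrix.vecHead, Matrix.vecTail])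

@[simp] lemma sswap_f_0 (p : EE) : sswap.f p 0 = p 1 := by
  show (!![0,1,0;1,0,0;0,0,-1] *ᵥ p) 0 = p 1
  simp [Matrix.mulVec, dotProduct, Fin.sum_univ_three, Matrix.vecHead, Matrix.vecTail]
@[simp] lemma sswap_f_1 (p : EE) : sswap.f p 1 = p 0 := by
  show (!![0,1,0;1,0,0;0,0,-1] *ᵥ p) 1 = p 0
  simp [Matrix.mulVec, dotProduct, Fin.sum_univ_three, Matrix.vecHead, Matrix.vecTail]
@[simp] lemma sswap_f_2 (p : EE) : sswap.f p 2 = -(p 2) := by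
  show (!![0,1,0;1,0,0;0,0,-1] *ᵥ p) 2 = -(p 2)
  simp [Matrix.mulVec, dotProduct, Fin.sum_univ_three, Matrix.vecHead, Matrix.vecTail]

lemma cB_nega (p : EE) : nega.f p ∈ crossingBeams ↔ p ∈ crossingBeams := by
  rw [mem_cB, mem_cB]
  simp only [nega, GM.diag_f_0, GM.diag_f_1, GM.diag_f_2, one_mul]
  constructor <;>
    rintro (⟨⟨h1, h2⟩, hr⟩ | ⟨⟨h1, h2⟩, hr⟩ | ⟨⟨h1, h2⟩, hr⟩) <;>
    first
      | exact Or.inl ⟨⟨by linarith, by linarith⟩, hr⟩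
      | exact Or.inr (Or.inl ⟨⟨by linarith, by linarith⟩, hr⟩)
      | exact Or.inr (Or.inr ⟨⟨by linarith, by linarith⟩, hr⟩)

lemma cB_negb (p : EE) : negb.f p ∈ crossingBeams ↔ p ∈ crossingBeams := by
  rw [mem_cB, mem_cB]
  simp only [negb, GM.diag_f_0, GM.diag_f_1, GM.diag_f_2, one_mul]
  constructor <;>
    rintro (⟨ha, ⟨h1, h2⟩, hr⟩ | ⟨ha, ⟨h1, h2⟩, hr⟩ | ⟨ha, ⟨h1, h2⟩, hr⟩) <;>
    first
      | exact Or.inl ⟨ha, ⟨by linarith, by linarith⟩, hr⟩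
      | exact Or.inr (Or.inl ⟨ha, ⟨by linarith, by linarith⟩, hr⟩)
      | exact Or.inr (Or.inr ⟨ha, ⟨by linarith, by linarith⟩, hr⟩)

lemma cB_sswap (p : EE) : sswap.f p ∈ crossingBeams ↔ p ∈ crossingBeams := by
  rw [mem_cB, mem_cB]
  simp only [sswap_f_0, sswap_f_1, sswap_f_2]
  constructor <;>
    rintro (⟨⟨h1, h2⟩, ⟨h3, h4⟩, h5, h6⟩ | ⟨⟨h1, h2⟩, ⟨h3, h4⟩, h5, h6⟩ |
      ⟨⟨h1, h2⟩, ⟨h3, h4⟩, h5⟩) <;>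
    first
      | exact Or.inl ⟨⟨by linarith, by linarith⟩, ⟨by linarith, by linarith⟩,
          by linarith, by linarith⟩
      | exact Or.inr (Or.inl ⟨⟨by linarith, by linarith⟩, ⟨by linarith, by linarith⟩,
          by linarith, by linarith⟩)
      | exact Or.inr (Or.inr ⟨⟨by linarith, by linarith⟩, ⟨by linarith, by linarith⟩,
          by linarith⟩)

lemma absmin4 {v A B C D : ℝ} (h : |v| < min A (min B (min C D))) :
    -A < v ∧ v < A ∧ -B < v ∧ v < B ∧ -C < v ∧ v < C ∧ -D < v ∧ v < D := by
  simp only [lt_min_iff, abs_lt] at h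
  exact ⟨h.1.1, h.1.2, h.2.1.1, h.2.1.2, h.2.2.1.1, h.2.2.1.2, h.2.2.2.1, h.2.2.2.2⟩

lemma hP01 : ∀ q : EE, GM.swap12.f q 0 = q 0 ∧ GM.swap12.f q 2 = q 1 :=
  fun q => ⟨by simp, by simp⟩
lemma hP02 : ∀ q : EE, id3.f q 0 = q 0 ∧ id3.f q 2 = q 2 :=
  fun q => ⟨by simp [id3], by simp [id3]⟩
lemma hP12 : ∀ q : EE, GM.swap01.f q 0 = q 1 ∧ GM.swap01.f q 2 = q 2 :=
  fun q => ⟨by simp, by simp⟩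
lemma swap12_zero : GM.swap12.f 0 = 0 := by
  apply EE.ext'; intro k; fin_cases k <;> simp
lemma swap01_zero : GM.swap01.f 0 = 0 := by
  apply EE.ext'; intro k; fin_cases k <;> simp
lemma id3_zero : id3.f 0 = 0 := diagGM_zero 1 1 1 _ _ _

set_option maxHeartbeats 2000000 in
lemma mainA (x : EE)
    (hbd : ((-10 ≤ x 0 ∧ x 0 ≤ 10) ∧ (-1 ≤ x 1 ∧ x 1 ≤ 1) ∧ (-2 ≤ x 2 ∧ x 2 ≤ 0)) ∨
           ((-1 ≤ x 0 ∧ x 0 ≤ 1) ∧ (-10 ≤ x 1 ∧ x 1 ≤ 10) ∧ (0 ≤ x 2 ∧ x 2 ≤ 2)))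
    (hnot : x ∉ crossingBeams) (ha0 : 0 ≤ x 0) (hb0 : 0 ≤ x 1) (hc0 : x 2 ≤ 0) :
    LocalChart x := by
  rcases eq_or_lt_of_le hc0 with hc | hc
  · -- x 2 = 0
    have hcl : (x 0 ≤ 10 ∧ x 1 ≤ 1) ∨ (x 0 ≤ 1 ∧ x 1 ≤ 10) := by
      rcases hbd with ⟨h1, h2, h3⟩ | ⟨h1, h2, h3⟩
      exacts [Or.inl ⟨h1.2, h2.2⟩, Or.inr ⟨h1.2, h2.2⟩]
    rcases lt_trichotomy (x 0) 1 with ha | ha | ha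
    · -- a < 1
      rcases lt_trichotomy (x 1) 1 with hb | hb | hb
      · exact absurd ((mem_cB _).mpr (Or.inr (Or.inr
          ⟨⟨by linarith, ha⟩, ⟨by linarith, hb⟩, hc⟩))) hnot
      · -- b = 1 : reentrant edge
        refine subOr x 1 2 GM.swap01 hP12 swap01_zero 1 (-1) (Or.inl rfl) (Or.inr rfl)
          (min (1 - x 0) (min 1 (min 1 1))) ?_ ?_
        · simp only [lt_min_iff]
          refine ⟨by linarith, by linarith, by linarith, by linarith⟩
        · intro p hp
          obtain ⟨a1, a2, a3, a4, a5, a6, a7, a8⟩ := absmin4 (hp 0)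
          obtain ⟨b1, b2, b3, b4, b5, b6, b7, b8⟩ := absmin4 (hp 1)
          obtain ⟨c1, c2, c3, c4, c5, c6, c7, c8⟩ := absmin4 (hp 2)
          rw [mem_cB]
          constructor
          · rintro (⟨⟨q1, q2⟩, ⟨q3, q4⟩, q5, q6⟩ | ⟨⟨q1, q2⟩, ⟨q3, q4⟩, q5, q6⟩ |
              ⟨⟨q1, q2⟩, ⟨q3, q4⟩, q5⟩)
            · exact Or.inl (by linarith)
            · exact Or.inr (by linarith)
            · exact Or.inl (by linarith)
          · intro hgoal
            rcases lt_trichotomy (p 2) 0 with hp2 | hp2 | hp2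
            · refine Or.inl ⟨⟨by linarith, by linarith⟩, ⟨by linarith, ?_⟩, by linarith, hp2⟩
              rcases hgoal with h | h <;> linarith
            · refine Or.inr (Or.inr ⟨⟨by linarith, by linarith⟩, ⟨by linarith, ?_⟩, hp2⟩)
              rcases hgoal with h | h <;> linarith
            · exact Or.inr (Or.inl ⟨⟨by linarith, by linarith⟩, ⟨by linarith, by linarith⟩,
                hp2, by linarith⟩)
      · -- b > 1
        have hb10 : x 1 ≤ 10 := by
          rcases hcl with ⟨_, h⟩ | ⟨_, h⟩ <;> linarith
        rcases eq_or_lt_of_le hb10 with hb10' | hb10'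
        · -- b = 10 : edge of upper beam
          refine sub2 x 1 2 GM.swap01 hP12 swap01_zero 1 (-1) (Or.inl rfl) (Or.inr rfl)
            (min (1 - x 0) (min 1 (min 1 1))) ?_ ?_
          · simp only [lt_min_iff]
            refine ⟨by linarith, by linarith, by linarith, by linarith⟩
          · intro p hp
            obtain ⟨a1, a2, a3, a4, a5, a6, a7, a8⟩ := absmin4 (hp 0)
            obtain ⟨b1, b2, b3, b4, b5, b6, b7, b8⟩ := absmin4 (hp 1)
            obtain ⟨c1, c2, c3, c4, c5, c6, c7, c8⟩ := absmin4 (hp 2)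
            rw [mem_cB]
            constructor
            · rintro (⟨⟨q1, q2⟩, ⟨q3, q4⟩, q5, q6⟩ | ⟨⟨q1, q2⟩, ⟨q3, q4⟩, q5, q6⟩ |
                ⟨⟨q1, q2⟩, ⟨q3, q4⟩, q5⟩) <;> exact ⟨by linarith, by linarith⟩
            · rintro ⟨g1, g2⟩
              exact Or.inr (Or.inl ⟨⟨by linarith, by linarith⟩, ⟨by linarith, by linarith⟩,
                by linarith, by linarith⟩)
        · -- 1 < b < 10 : face of upper beam
          refine sub1 x 2 (-1) (Or.inr rfl)
            (min (1 - x 0) (min (x 1 - 1) (min (10 - x 1) 1))) ?_ ?_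
          · simp only [lt_min_iff]
            refine ⟨by linarith, by linarith, by linarith, by linarith⟩
          · intro p hp
            obtain ⟨a1, a2, a3, a4, a5, a6, a7, a8⟩ := absmin4 (hp 0)
            obtain ⟨b1, b2, b3, b4, b5, b6, b7, b8⟩ := absmin4 (hp 1)
            obtain ⟨c1, c2, c3, c4, c5, c6, c7, c8⟩ := absmin4 (hp 2)
            rw [mem_cB]
            constructor
            · rintro (⟨⟨q1, q2⟩, ⟨q3, q4⟩, q5, q6⟩ | ⟨⟨q1, q2⟩, ⟨q3, q4⟩, q5, q6⟩ |
                ⟨⟨q1, q2⟩, ⟨q3, q4⟩, q5⟩) <;> linarith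
            · intro hgoal
              exact Or.inr (Or.inl ⟨⟨by linarith, by linarith⟩, ⟨by linarith, by linarith⟩,
                by linarith, by linarith⟩)
    · -- a = 1
      rcases lt_trichotomy (x 1) 1 with hb | hb | hb
      · -- b < 1 : reentrant edge
        refine subOr x 0 2 id3 hP02 id3_zero 1 1 (Or.inl rfl) (Or.inl rfl)
          (min (1 - x 1) (min 1 (min 1 1))) ?_ ?_
        · simp only [lt_min_iff]
          refine ⟨by linarith, by linarith, by linarith, by linarith⟩
        · intro p hp
          obtain ⟨a1, a2, a3, a4, a5, a6, a7, a8⟩ := absmin4 (hp 0)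
          obtain ⟨b1, b2, b3, b4, b5, b6, b7, b8⟩ := absmin4 (hp 1)
          obtain ⟨c1, c2, c3, c4, c5, c6, c7, c8⟩ := absmin4 (hp 2)
          rw [mem_cB]
          constructor
          · rintro (⟨⟨q1, q2⟩, ⟨q3, q4⟩, q5, q6⟩ | ⟨⟨q1, q2⟩, ⟨q3, q4⟩, q5, q6⟩ |
              ⟨⟨q1, q2⟩, ⟨q3, q4⟩, q5⟩)
            · exact Or.inr (by linarith)
            · exact Or.inl (by linarith)
            · exact Or.inl (by linarith)
          · intro hgoal
            rcases lt_trichotomy (p 2) 0 with hp2 | hp2 | hp2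
            · exact Or.inl ⟨⟨by linarith, by linarith⟩, ⟨by linarith, by linarith⟩,
                by linarith, hp2⟩
            · refine Or.inr (Or.inr ⟨⟨by linarith, ?_⟩, ⟨by linarith, by linarith⟩, hp2⟩)
              rcases hgoal with h | h <;> linarith
            · refine Or.inr (Or.inl ⟨⟨by linarith, ?_⟩, ⟨by linarith, by linarith⟩,
                hp2, by linarith⟩)
              rcases hgoal with h | h <;> linarith
      · -- b = 1 : the crossing corner
        refine subX x 1 1 (Or.inl rfl) (Or.inl rfl) (min 1 (min 1 (min 1 1))) ?_ ?_
        · simp only [lt_min_iff]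
          refine ⟨by linarith, by linarith, by linarith, by linarith⟩
        · intro p hp
          obtain ⟨a1, a2, a3, a4, a5, a6, a7, a8⟩ := absmin4 (hp 0)
          obtain ⟨b1, b2, b3, b4, b5, b6, b7, b8⟩ := absmin4 (hp 1)
          obtain ⟨c1, c2, c3, c4, c5, c6, c7, c8⟩ := absmin4 (hp 2)
          rw [mem_cB]
          constructor
          · rintro (⟨⟨q1, q2⟩, ⟨q3, q4⟩, q5, q6⟩ | ⟨⟨q1, q2⟩, ⟨q3, q4⟩, q5, q6⟩ |
              ⟨⟨q1, q2⟩, ⟨q3, q4⟩, q5⟩)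
            · exact Or.inl ⟨by linarith, by linarith⟩
            · exact Or.inr (Or.inl ⟨by linarith, by linarith⟩)
            · exact Or.inr (Or.inr ⟨by linarith, by linarith, by linarith⟩)
          · rintro (⟨g1, g2⟩ | ⟨g1, g2⟩ | ⟨g1, g2, g3⟩)
            · exact Or.inl ⟨⟨by linarith, by linarith⟩, ⟨by linarith, by linarith⟩,
                by linarith, by linarith⟩
            · exact Or.inr (Or.inl ⟨⟨by linarith, by linarith⟩, ⟨by linarith, by linarith⟩,
                by linarith, by linarith⟩)
            · exact Or.inr (Or.inr ⟨⟨by linarith, by linarith⟩, ⟨by linarith, by linarith⟩,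
                by linarith⟩)
      · -- b > 1
        have hb10 : x 1 ≤ 10 := by
          rcases hcl with ⟨_, h⟩ | ⟨_, h⟩ <;> linarith
        rcases eq_or_lt_of_le hb10 with hb10' | hb10'
        · -- a = 1, b = 10 : corner of upper beam
          refine sub3 x 1 1 (-1) (Or.inl rfl) (Or.inl rfl) (Or.inr rfl)
            (min 1 (min 1 (min 1 1))) ?_ ?_
          · simp only [lt_min_iff]
            refine ⟨by linarith, by linarith, by linarith, by linarith⟩
          · intro p hp
            obtain ⟨a1, a2, a3, a4, a5, a6, a7, a8⟩ := absmin4 (hp 0)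
            obtain ⟨b1, b2, b3, b4, b5, b6, b7, b8⟩ := absmin4 (hp 1)
            obtain ⟨c1, c2, c3, c4, c5, c6, c7, c8⟩ := absmin4 (hp 2)
            rw [mem_cB]
            constructor
            · rintro (⟨⟨q1, q2⟩, ⟨q3, q4⟩, q5, q6⟩ | ⟨⟨q1, q2⟩, ⟨q3, q4⟩, q5, q6⟩ |
                ⟨⟨q1, q2⟩, ⟨q3, q4⟩, q5⟩) <;>
                exact ⟨by linarith, by linarith, by linarith⟩
            · rintro ⟨g1, g2, g3⟩
              exact Or.inr (Or.inl ⟨⟨by linarith, by linarith⟩, ⟨by linarith, by linarith⟩,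
                by linarith, by linarith⟩)
        · -- a = 1, 1 < b < 10 : edge of upper beam
          refine sub2 x 0 2 id3 hP02 id3_zero 1 (-1) (Or.inl rfl) (Or.inr rfl)
            (min (x 1 - 1) (min (10 - x 1) (min 1 1))) ?_ ?_
          · simp only [lt_min_iff]
            refine ⟨by linarith, by linarith, by linarith, by linarith⟩
          · intro p hp
            obtain ⟨a1, a2, a3, a4, a5, a6, a7, a8⟩ := absmin4 (hp 0)
            obtain ⟨b1, b2, b3, b4, b5, b6, b7, b8⟩ := absmin4 (hp 1)
            obtain ⟨c1, c2, c3, c4, c5, c6, c7, c8⟩ := absmin4 (hp 2)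
            rw [mem_cB]
            constructor
            · rintro (⟨⟨q1, q2⟩, ⟨q3, q4⟩, q5, q6⟩ | ⟨⟨q1, q2⟩, ⟨q3, q4⟩, q5, q6⟩ |
                ⟨⟨q1, q2⟩, ⟨q3, q4⟩, q5⟩) <;> exact ⟨by linarith, by linarith⟩
            · rintro ⟨g1, g2⟩
              exact Or.inr (Or.inl ⟨⟨by linarith, by linarith⟩, ⟨by linarith, by linarith⟩,
                by linarith, by linarith⟩)
    · -- a > 1
      have hcl1 : x 0 ≤ 10 ∧ x 1 ≤ 1 := by
        rcases hcl with h | h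
        · exact h
        · exact absurd h.1 (by linarith)
      rcases lt_trichotomy (x 1) 1 with hb | hb | hb
      · -- b < 1
        rcases eq_or_lt_of_le hcl1.1 with ha10 | ha10
        · -- a = 10 : edge of lower beam (x = 10, z = 0)
          refine sub2 x 0 2 id3 hP02 id3_zero 1 1 (Or.inl rfl) (Or.inl rfl)
            (min (1 - x 1) (min 1 (min 1 1))) ?_ ?_
          · simp only [lt_min_iff]
            refine ⟨by linarith, by linarith, by linarith, by linarith⟩
          · intro p hp
            obtain ⟨a1, a2, a3, a4, a5, a6, a7, a8⟩ := absmin4 (hp 0)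
            obtain ⟨b1, b2, b3, b4, b5, b6, b7, b8⟩ := absmin4 (hp 1)
            obtain ⟨c1, c2, c3, c4, c5, c6, c7, c8⟩ := absmin4 (hp 2)
            rw [mem_cB]
            constructor
            · rintro (⟨⟨q1, q2⟩, ⟨q3, q4⟩, q5, q6⟩ | ⟨⟨q1, q2⟩, ⟨q3, q4⟩, q5, q6⟩ |
                ⟨⟨q1, q2⟩, ⟨q3, q4⟩, q5⟩) <;> exact ⟨by linarith, by linarith⟩
            · rintro ⟨g1, g2⟩
              exact Or.inl ⟨⟨by linarith, by linarith⟩, ⟨by linarith, by linarith⟩,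
                by linarith, by linarith⟩
        · -- 1 < a < 10 : top face of lower beam
          refine sub1 x 2 1 (Or.inl rfl)
            (min (x 0 - 1) (min (10 - x 0) (min (1 - x 1) 1))) ?_ ?_
          · simp only [lt_min_iff]
            refine ⟨by linarith, by linarith, by linarith, by linarith⟩
          · intro p hp
            obtain ⟨a1, a2, a3, a4, a5, a6, a7, a8⟩ := absmin4 (hp 0)
            obtain ⟨b1, b2, b3, b4, b5, b6, b7, b8⟩ := absmin4 (hp 1)
            obtain ⟨c1, c2, c3, c4, c5, c6, c7, c8⟩ := absmin4 (hp 2)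
            rw [mem_cB]
            constructor
            · rintro (⟨⟨q1, q2⟩, ⟨q3, q4⟩, q5, q6⟩ | ⟨⟨q1, q2⟩, ⟨q3, q4⟩, q5, q6⟩ |
                ⟨⟨q1, q2⟩, ⟨q3, q4⟩, q5⟩) <;> linarith
            · intro hgoal
              exact Or.inl ⟨⟨by linarith, by linarith⟩, ⟨by linarith, by linarith⟩,
                by linarith, by linarith⟩
      · -- b = 1
        rcases eq_or_lt_of_le hcl1.1 with ha10 | ha10
        · -- a = 10, b = 1 : corner of lower beam
          refine sub3 x 1 1 1 (Or.inl rfl) (Or.inl rfl) (Or.inl rfl)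
            (min 1 (min 1 (min 1 1))) ?_ ?_
          · simp only [lt_min_iff]
            refine ⟨by linarith, by linarith, by linarith, by linarith⟩
          · intro p hp
            obtain ⟨a1, a2, a3, a4, a5, a6, a7, a8⟩ := absmin4 (hp 0)
            obtain ⟨b1, b2, b3, b4, b5, b6, b7, b8⟩ := absmin4 (hp 1)
            obtain ⟨c1, c2, c3, c4, c5, c6, c7, c8⟩ := absmin4 (hp 2)
            rw [mem_cB]
            constructor
            · rintro (⟨⟨q1, q2⟩, ⟨q3, q4⟩, q5, q6⟩ | ⟨⟨q1, q2⟩, ⟨q3, q4⟩, q5, q6⟩ |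
                ⟨⟨q1, q2⟩, ⟨q3, q4⟩, q5⟩) <;>
                exact ⟨by linarith, by linarith, by linarith⟩
            · rintro ⟨g1, g2, g3⟩
              exact Or.inl ⟨⟨by linarith, by linarith⟩, ⟨by linarith, by linarith⟩,
                by linarith, by linarith⟩
        · -- 1 < a < 10, b = 1 : edge of lower beam
          refine sub2 x 1 2 GM.swap01 hP12 swap01_zero 1 1 (Or.inl rfl) (Or.inl rfl)
            (min (x 0 - 1) (min (10 - x 0) (min 1 1))) ?_ ?_
          · simp only [lt_min_iff]
            refine ⟨by linarith, by linarith, by linarith, by linarith⟩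
          · intro p hp
            obtain ⟨a1, a2, a3, a4, a5, a6, a7, a8⟩ := absmin4 (hp 0)
            obtain ⟨b1, b2, b3, b4, b5, b6, b7, b8⟩ := absmin4 (hp 1)
            obtain ⟨c1, c2, c3, c4, c5, c6, c7, c8⟩ := absmin4 (hp 2)
            rw [mem_cB]
            constructor
            · rintro (⟨⟨q1, q2⟩, ⟨q3, q4⟩, q5, q6⟩ | ⟨⟨q1, q2⟩, ⟨q3, q4⟩, q5, q6⟩ |
                ⟨⟨q1, q2⟩, ⟨q3, q4⟩, q5⟩) <;> exact ⟨by linarith, by linarith⟩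
            · rintro ⟨g1, g2⟩
              exact Or.inl ⟨⟨by linarith, by linarith⟩, ⟨by linarith, by linarith⟩,
                by linarith, by linarith⟩
      · exact absurd hcl1.2 (by linarith)
  · -- x 2 < 0 : pure lower-beam boundary
    have hb1 : (-10 ≤ x 0 ∧ x 0 ≤ 10) ∧ (-1 ≤ x 1 ∧ x 1 ≤ 1) ∧ (-2 ≤ x 2 ∧ x 2 ≤ 0) := by
      rcases hbd with h | h
      · exact h
      · exact absurd h.2.2.1 (by linarith)
    obtain ⟨⟨_, ha10⟩, ⟨_, hb1'⟩, hcm2, _⟩ := hb1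
    have hni : ¬(x 0 < 10 ∧ x 1 < 1 ∧ -2 < x 2) := fun h => hnot ((mem_cB _).mpr (Or.inl
      ⟨⟨by linarith, h.1⟩, ⟨by linarith, h.2.1⟩, h.2.2, hc⟩))
    rcases eq_or_lt_of_le ha10 with hA | hA
    · rcases eq_or_lt_of_le hb1' with hB | hB
      · rcases eq_or_lt_of_le hcm2 with hC | hC
        · -- a = 10, b = 1, c = -2 : corner
          refine sub3 x 1 1 (-1) (Or.inl rfl) (Or.inl rfl) (Or.inr rfl)
            (min 1 (min 1 (min 1 1))) ?_ ?_
          · simp only [lt_min_iff]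
            refine ⟨by linarith, by linarith, by linarith, by linarith⟩
          · intro p hp
            obtain ⟨a1, a2, a3, a4, a5, a6, a7, a8⟩ := absmin4 (hp 0)
            obtain ⟨b1, b2, b3, b4, b5, b6, b7, b8⟩ := absmin4 (hp 1)
            obtain ⟨c1, c2, c3, c4, c5, c6, c7, c8⟩ := absmin4 (hp 2)
            rw [mem_cB]
            constructor
            · rintro (⟨⟨q1, q2⟩, ⟨q3, q4⟩, q5, q6⟩ | ⟨⟨q1, q2⟩, ⟨q3, q4⟩, q5, q6⟩ |
                ⟨⟨q1, q2⟩, ⟨q3, q4⟩, q5⟩) <;>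
                exact ⟨by linarith, by linarith, by linarith⟩
            · rintro ⟨g1, g2, g3⟩
              exact Or.inl ⟨⟨by linarith, by linarith⟩, ⟨by linarith, by linarith⟩,
                by linarith, by linarith⟩
        · -- a = 10, b = 1, -2 < c < 0 : edge
          refine sub2 x 0 1 GM.swap12 hP01 swap12_zero 1 1 (Or.inl rfl) (Or.inl rfl)
            (min (-(x 2)) (min (x 2 + 2) (min 1 1))) ?_ ?_
          · simp only [lt_min_iff]
            refine ⟨by linarith, by linarith, by linarith, by linarith⟩
          · intro p hp
            obtain ⟨a1, a2, a3, a4, a5, a6, a7, a8⟩ := absmin4 (hp 0)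
            obtain ⟨b1, b2, b3, b4, b5, b6, b7, b8⟩ := absmin4 (hp 1)
            obtain ⟨c1, c2, c3, c4, c5, c6, c7, c8⟩ := absmin4 (hp 2)
            rw [mem_cB]
            constructor
            · rintro (⟨⟨q1, q2⟩, ⟨q3, q4⟩, q5, q6⟩ | ⟨⟨q1, q2⟩, ⟨q3, q4⟩, q5, q6⟩ |
                ⟨⟨q1, q2⟩, ⟨q3, q4⟩, q5⟩) <;> exact ⟨by linarith, by linarith⟩
            · rintro ⟨g1, g2⟩
              exact Or.inl ⟨⟨by linarith, by linarith⟩, ⟨by linarith, by linarith⟩,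
                by linarith, by linarith⟩
      · rcases eq_or_lt_of_le hcm2 with hC | hC
        · -- a = 10, b < 1, c = -2 : edge
          refine sub2 x 0 2 id3 hP02 id3_zero 1 (-1) (Or.inl rfl) (Or.inr rfl)
            (min (1 - x 1) (min 1 (min 1 1))) ?_ ?_
          · simp only [lt_min_iff]
            refine ⟨by linarith, by linarith, by linarith, by linarith⟩
          · intro p hp
            obtain ⟨a1, a2, a3, a4, a5, a6, a7, a8⟩ := absmin4 (hp 0)
            obtain ⟨b1, b2, b3, b4, b5, b6, b7, b8⟩ := absmin4 (hp 1)
            obtain ⟨c1, c2, c3, c4, c5, c6, c7, c8⟩ := absmin4 (hp 2)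
            rw [mem_cB]
            constructor
            · rintro (⟨⟨q1, q2⟩, ⟨q3, q4⟩, q5, q6⟩ | ⟨⟨q1, q2⟩, ⟨q3, q4⟩, q5, q6⟩ |
                ⟨⟨q1, q2⟩, ⟨q3, q4⟩, q5⟩) <;> exact ⟨by linarith, by linarith⟩
            · rintro ⟨g1, g2⟩
              exact Or.inl ⟨⟨by linarith, by linarith⟩, ⟨by linarith, by linarith⟩,
                by linarith, by linarith⟩
        · -- a = 10, b < 1, -2 < c < 0 : face x = 10
          refine sub1 x 0 1 (Or.inl rfl)
            (min (1 - x 1) (min (x 1 + 1) (min (-(x 2)) (x 2 + 2)))) ?_ ?_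
          · simp only [lt_min_iff]
            refine ⟨by linarith, by linarith, by linarith, by linarith⟩
          · intro p hp
            obtain ⟨a1, a2, a3, a4, a5, a6, a7, a8⟩ := absmin4 (hp 0)
            obtain ⟨b1, b2, b3, b4, b5, b6, b7, b8⟩ := absmin4 (hp 1)
            obtain ⟨c1, c2, c3, c4, c5, c6, c7, c8⟩ := absmin4 (hp 2)
            rw [mem_cB]
            constructor
            · rintro (⟨⟨q1, q2⟩, ⟨q3, q4⟩, q5, q6⟩ | ⟨⟨q1, q2⟩, ⟨q3, q4⟩, q5, q6⟩ |
                ⟨⟨q1, q2⟩, ⟨q3, q4⟩, q5⟩) <;> linarith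
            · intro hgoal
              exact Or.inl ⟨⟨by linarith, by linarith⟩, ⟨by linarith, by linarith⟩,
                by linarith, by linarith⟩
    · rcases eq_or_lt_of_le hb1' with hB | hB
      · rcases eq_or_lt_of_le hcm2 with hC | hC
        · -- a < 10, b = 1, c = -2 : edge
          refine sub2 x 1 2 GM.swap01 hP12 swap01_zero 1 (-1) (Or.inl rfl) (Or.inr rfl)
            (min (10 - x 0) (min 1 (min 1 1))) ?_ ?_
          · simp only [lt_min_iff]
            refine ⟨by linarith, by linarith, by linarith, by linarith⟩
          · intro p hp
            obtain ⟨a1, a2, a3, a4, a5, a6, a7, a8⟩ := absmin4 (hp 0)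
            obtain ⟨b1, b2, b3, b4, b5, b6, b7, b8⟩ := absmin4 (hp 1)
            obtain ⟨c1, c2, c3, c4, c5, c6, c7, c8⟩ := absmin4 (hp 2)
            rw [mem_cB]
            constructor
            · rintro (⟨⟨q1, q2⟩, ⟨q3, q4⟩, q5, q6⟩ | ⟨⟨q1, q2⟩, ⟨q3, q4⟩, q5, q6⟩ |
                ⟨⟨q1, q2⟩, ⟨q3, q4⟩, q5⟩) <;> exact ⟨by linarith, by linarith⟩
            · rintro ⟨g1, g2⟩
              exact Or.inl ⟨⟨by linarith, by linarith⟩, ⟨by linarith, by linarith⟩,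
                by linarith, by linarith⟩
        · -- a < 10, b = 1, -2 < c < 0 : face y = 1
          refine sub1 x 1 1 (Or.inl rfl)
            (min (10 - x 0) (min (-(x 2)) (min (x 2 + 2) 1))) ?_ ?_
          · simp only [lt_min_iff]
            refine ⟨by linarith, by linarith, by linarith, by linarith⟩
          · intro p hp
            obtain ⟨a1, a2, a3, a4, a5, a6, a7, a8⟩ := absmin4 (hp 0)
            obtain ⟨b1, b2, b3, b4, b5, b6, b7, b8⟩ := absmin4 (hp 1)
            obtain ⟨c1, c2, c3, c4, c5, c6, c7, c8⟩ := absmin4 (hp 2)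
            rw [mem_cB]
            constructor
            · rintro (⟨⟨q1, q2⟩, ⟨q3, q4⟩, q5, q6⟩ | ⟨⟨q1, q2⟩, ⟨q3, q4⟩, q5, q6⟩ |
                ⟨⟨q1, q2⟩, ⟨q3, q4⟩, q5⟩) <;> linarith
            · intro hgoal
              exact Or.inl ⟨⟨by linarith, by linarith⟩, ⟨by linarith, by linarith⟩,
                by linarith, by linarith⟩
      · rcases eq_or_lt_of_le hcm2 with hC | hC
        · -- a < 10, b < 1, c = -2 : bottom face
          refine sub1 x 2 (-1) (Or.inr rfl)
            (min (10 - x 0) (min (1 - x 1) (min 1 1))) ?_ ?_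
          · simp only [lt_min_iff]
            refine ⟨by linarith, by linarith, by linarith, by linarith⟩
          · intro p hp
            obtain ⟨a1, a2, a3, a4, a5, a6, a7, a8⟩ := absmin4 (hp 0)
            obtain ⟨b1, b2, b3, b4, b5, b6, b7, b8⟩ := absmin4 (hp 1)
            obtain ⟨c1, c2, c3, c4, c5, c6, c7, c8⟩ := absmin4 (hp 2)
            rw [mem_cB]
            constructor
            · rintro (⟨⟨q1, q2⟩, ⟨q3, q4⟩, q5, q6⟩ | ⟨⟨q1, q2⟩, ⟨q3, q4⟩, q5, q6⟩ |
                ⟨⟨q1, q2⟩, ⟨q3, q4⟩, q5⟩) <;> linarith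
            · intro hgoal
              exact Or.inl ⟨⟨by linarith, by linarith⟩, ⟨by linarith, by linarith⟩,
                by linarith, by linarith⟩
        · exact absurd ⟨hA, hB, hC⟩ hni

lemma nega_c0 (p : EE) : nega.f p 0 = -(p 0) := by simp [nega]
lemma nega_c1 (p : EE) : nega.f p 1 = p 1 := by simp [nega]
lemma nega_c2 (p : EE) : nega.f p 2 = p 2 := by simp [nega]
lemma negb_c0 (p : EE) : negb.f p 0 = p 0 := by simp [negb]
lemma negb_c1 (p : EE) : negb.f p 1 = -(p 1) := by simp [negb]
lemma negb_c2 (p : EE) : negb.f p 2 = p 2 := by simp [negb]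

def BDhyp (x : EE) : Prop :=
  ((-10 ≤ x 0 ∧ x 0 ≤ 10) ∧ (-1 ≤ x 1 ∧ x 1 ≤ 1) ∧ (-2 ≤ x 2 ∧ x 2 ≤ 0)) ∨
  ((-1 ≤ x 0 ∧ x 0 ≤ 1) ∧ (-10 ≤ x 1 ∧ x 1 ≤ 10) ∧ (0 ≤ x 2 ∧ x 2 ≤ 2))

lemma mainB (x : EE) (hbd : BDhyp x) (hnot : x ∉ crossingBeams)
    (ha : 0 ≤ x 0) (hc : x 2 ≤ 0) : LocalChart x := by
  rcases le_or_gt 0 (x 1) with hb | hb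
  · exact mainA x hbd hnot ha hb hc
  · apply localChart_conj x negb cB_negb
    apply mainA (negb.f x) ?_ ?_ ?_ ?_ ?_
    · rcases hbd with ⟨⟨h1, h2⟩, ⟨h3, h4⟩, h5, h6⟩ | ⟨⟨h1, h2⟩, ⟨h3, h4⟩, h5, h6⟩
      · exact Or.inl ⟨⟨by rw [negb_c0]; linarith, by rw [negb_c0]; linarith⟩,
          ⟨by rw [negb_c1]; linarith, by rw [negb_c1]; linarith⟩,
          ⟨by rw [negb_c2]; linarith, by rw [negb_c2]; linarith⟩⟩
      · exact Or.inr ⟨⟨by rw [negb_c0]; linarith, by rw [negb_c0]; linarith⟩,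
          ⟨by rw [negb_c1]; linarith, by rw [negb_c1]; linarith⟩,
          ⟨by rw [negb_c2]; linarith, by rw [negb_c2]; linarith⟩⟩
    · exact fun h => hnot ((cB_negb x).mp h)
    · rw [negb_c0]; exact ha
    · rw [negb_c1]; linarith
    · rw [negb_c2]; exact hc

lemma mainC (x : EE) (hbd : BDhyp x) (hnot : x ∉ crossingBeams)
    (hc : x 2 ≤ 0) : LocalChart x := by
  rcases le_or_gt 0 (x 0) with ha | ha
  · exact mainB x hbd hnot ha hc
  · apply localChart_conj x nega cB_nega
    apply mainB (nega.f x) ?_ ?_ ?_ ?_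
    · rcases hbd with ⟨⟨h1, h2⟩, ⟨h3, h4⟩, h5, h6⟩ | ⟨⟨h1, h2⟩, ⟨h3, h4⟩, h5, h6⟩
      · exact Or.inl ⟨⟨by rw [nega_c0]; linarith, by rw [nega_c0]; linarith⟩,
          ⟨by rw [nega_c1]; linarith, by rw [nega_c1]; linarith⟩,
          ⟨by rw [nega_c2]; linarith, by rw [nega_c2]; linarith⟩⟩
      · exact Or.inr ⟨⟨by rw [nega_c0]; linarith, by rw [nega_c0]; linarith⟩,
          ⟨by rw [nega_c1]; linarith, by rw [nega_c1]; linarith⟩,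
          ⟨by rw [nega_c2]; linarith, by rw [nega_c2]; linarith⟩⟩
    · exact fun h => hnot ((cB_nega x).mp h)
    · rw [nega_c0]; linarith
    · rw [nega_c2]; exact hc

lemma mainAll (x : EE) (hbd : BDhyp x) (hnot : x ∉ crossingBeams) : LocalChart x := by
  rcases le_or_gt (x 2) 0 with hc | hc
  · exact mainC x hbd hnot hc
  · apply localChart_conj x sswap cB_sswap
    apply mainC (sswap.f x) ?_ ?_ ?_
    · rcases hbd with ⟨⟨h1, h2⟩, ⟨h3, h4⟩, h5, h6⟩ | ⟨⟨h1, h2⟩, ⟨h3, h4⟩, h5, h6⟩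
      · exact Or.inr ⟨⟨by rw [sswap_f_0]; linarith, by rw [sswap_f_0]; linarith⟩,
          ⟨by rw [sswap_f_1]; linarith, by rw [sswap_f_1]; linarith⟩,
          ⟨by rw [sswap_f_2]; linarith, by rw [sswap_f_2]; linarith⟩⟩
      · exact Or.inl ⟨⟨by rw [sswap_f_0]; linarith, by rw [sswap_f_0]; linarith⟩,
          ⟨by rw [sswap_f_1]; linarith, by rw [sswap_f_1]; linarith⟩,
          ⟨by rw [sswap_f_2]; linarith, by rw [sswap_f_2]; linarith⟩⟩
    · exact fun h => hnot ((cB_sswap x).mp h)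
    · rw [sswap_f_2]; linarith

lemma isOpen_cB : IsOpen crossingBeams := by
  have hV : crossingBeams =
      {p : EE | ((-10 < p 0 ∧ p 0 < 10) ∧ (-1 < p 1 ∧ p 1 < 1) ∧ (-2 < p 2 ∧ p 2 < 0))} ∪
      ({p : EE | ((-1 < p 0 ∧ p 0 < 1) ∧ (-10 < p 1 ∧ p 1 < 10) ∧ (0 < p 2 ∧ p 2 < 2))} ∪
       {p : EE | ((-1 < p 0 ∧ p 0 < 1) ∧ (-1 < p 1 ∧ p 1 < 1) ∧ (-2 < p 2 ∧ p 2 < 2))}) := by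
    ext p
    rw [mem_cB]
    simp only [mem_union, mem_setOf_eq]
    constructor
    · rintro (h | h | ⟨⟨h1, h2⟩, ⟨h3, h4⟩, h5⟩)
      · exact Or.inl h
      · exact Or.inr (Or.inl h)
      · exact Or.inr (Or.inr ⟨⟨h1, h2⟩, ⟨h3, h4⟩, by linarith, by linarith⟩)
    · rintro (h | h | ⟨⟨h1, h2⟩, ⟨h3, h4⟩, h5, h6⟩)
      · exact Or.inl h
      · exact Or.inr (Or.inl h)
      · rcases lt_trichotomy (p 2) 0 with hz | hz | hz
        · exact Or.inl ⟨⟨by linarith, by linarith⟩, ⟨h3, h4⟩, h5, hz⟩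
        · exact Or.inr (Or.inr ⟨⟨h1, h2⟩, ⟨h3, h4⟩, hz⟩)
        · exact Or.inr (Or.inl ⟨⟨h1, h2⟩, ⟨by linarith, by linarith⟩, hz, by linarith⟩)
  rw [hV]
  have hbox : ∀ (l0 u0 l1 u1 l2 u2 : ℝ), IsOpen {p : EE |
      ((l0 < p 0 ∧ p 0 < u0) ∧ (l1 < p 1 ∧ p 1 < u1) ∧ (l2 < p 2 ∧ p 2 < u2))} := by
    intro l0 u0 l1 u1 l2 u2
    apply IsOpen.and
    · exact (isOpen_lt continuous_const (coord_continuous 0)).and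
        (isOpen_lt (coord_continuous 0) continuous_const)
    · apply IsOpen.and
      · exact (isOpen_lt continuous_const (coord_continuous 1)).and
          (isOpen_lt (coord_continuous 1) continuous_const)
      · exact (isOpen_lt continuous_const (coord_continuous 2)).and
          (isOpen_lt (coord_continuous 2) continuous_const)
  exact (hbox _ _ _ _ _ _).union ((hbox _ _ _ _ _ _).union (hbox _ _ _ _ _ _))

lemma closure_cB_subset : closure crossingBeams ⊆ {p : EE | BDhyp p} := by
  apply closure_minimal
  · intro p hp
    rw [mem_cB] at hp
    rcases hp with ⟨⟨h1, h2⟩, ⟨h3, h4⟩, h5, h6⟩ | ⟨⟨h1, h2⟩, ⟨h3, h4⟩, h5, h6⟩ |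
      ⟨⟨h1, h2⟩, ⟨h3, h4⟩, h5⟩
    · exact Or.inl ⟨⟨by linarith, by linarith⟩, ⟨by linarith, by linarith⟩,
        by linarith, by linarith⟩
    · exact Or.inr ⟨⟨by linarith, by linarith⟩, ⟨by linarith, by linarith⟩,
        by linarith, by linarith⟩
    · exact Or.inl ⟨⟨by linarith, by linarith⟩, ⟨by linarith, by linarith⟩,
        by linarith, by linarith⟩
  · have hclosed : ∀ (l0 u0 l1 u1 l2 u2 : ℝ), IsClosed {p : EE |
        ((l0 ≤ p 0 ∧ p 0 ≤ u0) ∧ (l1 ≤ p 1 ∧ p 1 ≤ u1) ∧ (l2 ≤ p 2 ∧ p 2 ≤ u2))} := by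
      intro l0 u0 l1 u1 l2 u2
      have : {p : EE | ((l0 ≤ p 0 ∧ p 0 ≤ u0) ∧ (l1 ≤ p 1 ∧ p 1 ≤ u1) ∧
          (l2 ≤ p 2 ∧ p 2 ≤ u2))} =
          ({p : EE | l0 ≤ p 0} ∩ {p : EE | p 0 ≤ u0}) ∩
          (({p : EE | l1 ≤ p 1} ∩ {p : EE | p 1 ≤ u1}) ∩
           ({p : EE | l2 ≤ p 2} ∩ {p : EE | p 2 ≤ u2})) := by
        ext p; simp only [mem_inter_iff, mem_setOf_eq]
      rw [this]
      exact ((isClosed_le continuous_const (coord_continuous 0)).inter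
          (isClosed_le (coord_continuous 0) continuous_const)).inter
        (((isClosed_le continuous_const (coord_continuous 1)).inter
          (isClosed_le (coord_continuous 1) continuous_const)).inter
         ((isClosed_le continuous_const (coord_continuous 2)).inter
          (isClosed_le (coord_continuous 2) continuous_const)))
    have : {p : EE | BDhyp p} = {p : EE |
        ((-10 ≤ p 0 ∧ p 0 ≤ 10) ∧ (-1 ≤ p 1 ∧ p 1 ≤ 1) ∧ (-2 ≤ p 2 ∧ p 2 ≤ 0))} ∪
        {p : EE | ((-1 ≤ p 0 ∧ p 0 ≤ 1) ∧ (-10 ≤ p 1 ∧ p 1 ≤ 10) ∧ (0 ≤ p 2 ∧ p 2 ≤ 2))} := by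
      ext p; simp [BDhyp, mem_union, mem_setOf_eq]
    rw [this]
    exact (hclosed _ _ _ _ _ _).union (hclosed _ _ _ _ _ _)

lemma smul_lhuc (r : ℝ) (hr : 0 < r) :
    r • lowerHalfUnitCube = {q : EE | (∀ k, |q k| < r) ∧ q 2 < 0} := by
  ext q
  rw [Set.mem_smul_set_iff_inv_smul_mem₀ (ne_of_gt hr)]
  simp only [lowerHalfUnitCube, mem_inter_iff, mem_setOf_eq, PiLp.smul_apply, smul_eq_mul]
  have hrinv : 0 < r⁻¹ := inv_pos.mpr hr
  constructor
  · rintro ⟨h1, h2⟩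
    refine ⟨fun k => ?_, by nlinarith⟩
    have h3 := h1 k
    rw [abs_mul, abs_inv, abs_of_pos hr] at h3
    have h4 : r * (r⁻¹ * |q k|) < r * 1 := mul_lt_mul_of_pos_left h3 hr
    rw [mul_one, ← mul_assoc, mul_inv_cancel₀ (ne_of_gt hr), one_mul] at h4
    exact h4
  · rintro ⟨h1, h2⟩
    refine ⟨fun k => ?_, by nlinarith⟩
    rw [abs_mul, abs_inv, abs_of_pos hr]
    have h3 := h1 k
    have h4 : r⁻¹ * |q k| < r⁻¹ * r := mul_lt_mul_of_pos_left h3 hrinv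
    rwa [inv_mul_cancel₀ (ne_of_gt hr)] at h4

end AuxiliaryGroegerMachinery

/-- the set `B_⋈` of two crossing beams is regular in the sense of Gröger
with volume-preserving charts: around every boundary point `x` there is an open
neighborhood `Υ` and a volume-preserving bi-Lipschitz chart `φ` with `φ x = 0` mapping
`B_⋈ ∩ Υ` onto `α K_-` for some `α > 0`. -/
theorem crossingBeams_groeger_regular :
    ∀ x ∈ frontier crossingBeams,
      ∃ (Υ : Set (EuclideanSpace ℝ (Fin 3)))
        (φ : EuclideanSpace ℝ (Fin 3) → EuclideanSpace ℝ (Fin 3)) (K : NNReal) (α : ℝ),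
        0 < α ∧ IsOpen Υ ∧ x ∈ Υ ∧
        LipschitzOnWith K φ Υ ∧ AntilipschitzWith K (Υ.restrict φ) ∧
        φ x = 0 ∧
        (∀ s : Set (EuclideanSpace ℝ (Fin 3)), s ⊆ Υ → MeasurableSet s →
          volume (φ '' s) = volume s) ∧
        φ '' (crossingBeams ∩ Υ) = α • lowerHalfUnitCube := by
  intro x hx
  have hopen : IsOpen crossingBeams := isOpen_cB
  have hnotin : x ∉ crossingBeams := by
    intro h
    exact hx.2 (by rwa [hopen.interior_eq])
  have hbd : BDhyp x := closure_cB_subset hx.1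
  obtain ⟨h, r, hr, hx0, hiff⟩ := mainAll x hbd hnotin
  refine ⟨h.f ⁻¹' {q : EE | ∀ k, |q k| < r}, h.f, h.K, r, hr, ?_, ?_, ?_, ?_, hx0, ?_, ?_⟩
  · -- open
    apply IsOpen.preimage h.lf.continuous
    have heq : {q : EE | ∀ k, |q k| < r} = ⋂ k : Fin 3, {q : EE | |q k| < r} := by
      ext q; simp
    rw [heq]
    exact isOpen_iInter_of_finite fun k =>
      isOpen_lt ((coord_continuous k).abs) continuous_const
  · -- membership
    simp only [mem_preimage, mem_setOf_eq, hx0]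
    intro k
    simpa using hr
  · exact h.lf.lipschitzOnWith
  · exact h.antilip.restrict _
  · intro s _ hms
    exact h.meas s hms
  · rw [smul_lhuc r hr]
    ext q
    constructor
    · rintro ⟨p, ⟨hpB, hpU⟩, rfl⟩
      have hsmall : ∀ k, |h.f p k| < r := hpU
      exact ⟨hsmall, (hiff p hsmall).mp hpB⟩
    · rintro ⟨hq1, hq2⟩
      refine ⟨h.g q, ⟨?_, ?_⟩, h.fg q⟩
      · have hsmall : ∀ k, |h.f (h.g q) k| < r := by rw [h.fg]; exact hq1
        apply (hiff _ hsmall).mpr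
        rw [h.fg]
        exact hq2
      · show h.g q ∈ h.f ⁻¹' _
        simp only [mem_preimage, mem_setOf_eq, h.fg]
        exact hq1
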